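/- Suppose there exist functions A, B : ℝ⁵ → ℂ such that [L̄, T] f = A·(T f) + B·(S f) for every smooth f : ℝ⁵ → ℂ, and suppose that at every point p ∈ ℝ⁵ the two vectors ( (T u₁)(p), (T u₂)(p), (T u₃)(p) ) and ( (S u₁)(p), (S u₂)(p), (S u₃)(p) ) of ℂ³ are linearly independent over ℂ, where u_j denotes the j-th fiber coordinate function (x, y, u₁, u₂, u₃) ↦ u_j. Then B·conj(B) ≡ 1 and conj(A) + conj(B)·A ≡ 0 on ℝ⁵. (These are the paper's boxed relations B B̄ = 1 and Ā + B̄ A = 0 for General Class III₂.) -/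
import Mathlib


noncomputable section
open Complex ComplexConjugate

/-- Points of `ℝ⁵`, with coordinates `(x, y, u₁, u₂, u₃)` and `z = x + i y`. -/
abbrev V5 := Fin 5 → ℝ

/-- Partial derivative in the `j`-th coordinate direction. -/
def pd (j : Fin 5) (f : V5 → ℂ) : V5 → ℂ := fun p => fderiv ℝ f p (Pi.single j 1)

/-- Wirtinger derivative `f_z := (f_x − i f_y)/2`. -/
def wz (f : V5 → ℂ) : V5 → ℂ := fun p => (pd 0 f p - I * pd 1 f p) / 2

/-- Wirtinger derivative `f_z̄ := (f_x + i f_y)/2`. -/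
def wzb (f : V5 → ℂ) : V5 → ℂ := fun p => (pd 0 f p + I * pd 1 f p) / 2

variable (a₁ a₂ a₃ : V5 → ℂ)

/-- The operator `L f := f_z + a₁ f_{u₁} + a₂ f_{u₂} + a₃ f_{u₃}`. -/
def Lop (f : V5 → ℂ) : V5 → ℂ := fun p =>
  wz f p + a₁ p * pd 2 f p + a₂ p * pd 3 f p + a₃ p * pd 4 f p

/-- The operator `L̄ f := f_z̄ + ā₁ f_{u₁} + ā₂ f_{u₂} + ā₃ f_{u₃}`. -/
def Lbop (f : V5 → ℂ) : V5 → ℂ := fun p =>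
  wzb f p + conj (a₁ p) * pd 2 f p + conj (a₂ p) * pd 3 f p + conj (a₃ p) * pd 4 f p

/-- The operator `T := i·[L, L̄]`. -/
def Tof (f : V5 → ℂ) : V5 → ℂ := fun p =>
  I * (Lop a₁ a₂ a₃ (Lbop a₁ a₂ a₃ f) p - Lbop a₁ a₂ a₃ (Lop a₁ a₂ a₃ f) p)

/-- The operator `S := [L, T]`. -/
def Sof (f : V5 → ℂ) : V5 → ℂ := fun p =>
  Lop a₁ a₂ a₃ (Tof a₁ a₂ a₃ f) p - Tof a₁ a₂ a₃ (Lop a₁ a₂ a₃ f) p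

/-- The operator `S̄ := [L̄, T]`. -/
def Sbof (f : V5 → ℂ) : V5 → ℂ := fun p =>
  Lbop a₁ a₂ a₃ (Tof a₁ a₂ a₃ f) p - Tof a₁ a₂ a₃ (Lbop a₁ a₂ a₃ f) p

/-- The `j`-th fiber coordinate function `(x, y, u₁, u₂, u₃) ↦ u_j`, `j = 1, 2, 3`. -/
def uc (k : Fin 3) : V5 → ℂ := fun q => (q (k.addNat 2) : ℂ)

/-! ### Auxiliary lemmas -/

lemma contDiff_pd (j : Fin 5) {f : V5 → ℂ} (hf : ContDiff ℝ (⊤ : ℕ∞) f) :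
    ContDiff ℝ (⊤ : ℕ∞) (pd j f) := by
  have : ContDiff ℝ (⊤ : ℕ∞) fun p => fderiv ℝ f p (Pi.single j 1) :=
    (hf.fderiv_right (m := (⊤:ℕ∞)) (by simp)).clm_apply contDiff_const
  exact this

lemma pd_conj (j : Fin 5) (f : V5 → ℂ) (p : V5) :
    pd j (fun q => conj (f q)) p = conj (pd j f p) := by
  have h : (fun q => conj (f q)) = (Complex.conjCLE : ℂ → ℂ) ∘ f := rfl
  simp only [pd, h, ContinuousLinearEquiv.comp_fderiv, ContinuousLinearMap.coe_comp',
    Function.comp_apply, ContinuousLinearEquiv.coe_coe, Complex.conjCLE_apply]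

lemma contDiff_conj {f : V5 → ℂ} (hf : ContDiff ℝ (⊤ : ℕ∞) f) :
    ContDiff ℝ (⊤ : ℕ∞) (fun q => conj (f q)) :=
  Complex.conjCLE.contDiff.comp hf

variable (ha₁ : ContDiff ℝ (⊤ : ℕ∞) a₁) (ha₂ : ContDiff ℝ (⊤ : ℕ∞) a₂)
  (ha₃ : ContDiff ℝ (⊤ : ℕ∞) a₃)

include ha₁ ha₂ ha₃ in
lemma contDiff_Lop {f : V5 → ℂ} (hf : ContDiff ℝ (⊤ : ℕ∞) f) :
    ContDiff ℝ (⊤ : ℕ∞) (Lop a₁ a₂ a₃ f) := by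
  have : ContDiff ℝ (⊤ : ℕ∞) fun p =>
      wz f p + a₁ p * pd 2 f p + a₂ p * pd 3 f p + a₃ p * pd 4 f p := by
    have hwz : ContDiff ℝ (⊤ : ℕ∞) (wz f) := by
      have : ContDiff ℝ (⊤ : ℕ∞) fun p => (pd 0 f p - I * pd 1 f p) / 2 :=
        ((contDiff_pd 0 hf).sub (contDiff_const.mul (contDiff_pd 1 hf))).div_const 2
      exact this
    exact ((hwz.add (ha₁.mul (contDiff_pd 2 hf))).add (ha₂.mul (contDiff_pd 3 hf))).add
      (ha₃.mul (contDiff_pd 4 hf))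
  exact this

include ha₁ ha₂ ha₃ in
lemma contDiff_Lbop {f : V5 → ℂ} (hf : ContDiff ℝ (⊤ : ℕ∞) f) :
    ContDiff ℝ (⊤ : ℕ∞) (Lbop a₁ a₂ a₃ f) := by
  have : ContDiff ℝ (⊤ : ℕ∞) fun p =>
      wzb f p + conj (a₁ p) * pd 2 f p + conj (a₂ p) * pd 3 f p + conj (a₃ p) * pd 4 f p := by
    have hwz : ContDiff ℝ (⊤ : ℕ∞) (wzb f) := by
      have : ContDiff ℝ (⊤ : ℕ∞) fun p => (pd 0 f p + I * pd 1 f p) / 2 :=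
        ((contDiff_pd 0 hf).add (contDiff_const.mul (contDiff_pd 1 hf))).div_const 2
      exact this
    exact ((hwz.add ((contDiff_conj ha₁).mul (contDiff_pd 2 hf))).add
      ((contDiff_conj ha₂).mul (contDiff_pd 3 hf))).add
      ((contDiff_conj ha₃).mul (contDiff_pd 4 hf))
  exact this

include ha₁ ha₂ ha₃ in
lemma contDiff_Tof {f : V5 → ℂ} (hf : ContDiff ℝ (⊤ : ℕ∞) f) :
    ContDiff ℝ (⊤ : ℕ∞) (Tof a₁ a₂ a₃ f) := by
  have : ContDiff ℝ (⊤ : ℕ∞) fun p =>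
      I * (Lop a₁ a₂ a₃ (Lbop a₁ a₂ a₃ f) p - Lbop a₁ a₂ a₃ (Lop a₁ a₂ a₃ f) p) :=
    contDiff_const.mul ((contDiff_Lop a₁ a₂ a₃ ha₁ ha₂ ha₃
      (contDiff_Lbop a₁ a₂ a₃ ha₁ ha₂ ha₃ hf)).sub
      (contDiff_Lbop a₁ a₂ a₃ ha₁ ha₂ ha₃ (contDiff_Lop a₁ a₂ a₃ ha₁ ha₂ ha₃ hf)))
  exact this

/-- `L` applied to a conjugate equals the conjugate of `L̄`. -/
lemma Lop_conj (f : V5 → ℂ) :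
    Lop a₁ a₂ a₃ (fun q => conj (f q)) = fun p => conj (Lbop a₁ a₂ a₃ f p) := by
  funext p
  simp only [Lop, Lbop, wz, wzb, pd_conj, map_add, map_div₀, map_mul, Complex.conj_I,
    Complex.conj_conj, map_ofNat]
  ring

/-- `L̄` applied to a conjugate equals the conjugate of `L`. -/
lemma Lbop_conj (f : V5 → ℂ) :
    Lbop a₁ a₂ a₃ (fun q => conj (f q)) = fun p => conj (Lop a₁ a₂ a₃ f p) := by
  funext p
  simp only [Lop, Lbop, wz, wzb, pd_conj, map_add, map_sub, map_div₀, map_mul, Complex.conj_I,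
    Complex.conj_conj, map_ofNat]
  ring

/-- `T` commutes with conjugation. -/
lemma Tof_conj (f : V5 → ℂ) :
    Tof a₁ a₂ a₃ (fun q => conj (f q)) = fun p => conj (Tof a₁ a₂ a₃ f p) := by
  funext p
  simp only [Tof, Lbop_conj, Lop_conj]
  simp only [map_mul, map_sub, Complex.conj_I]
  ring

/-- `S` applied to a conjugate equals the conjugate of `S̄`. -/
lemma Sof_conj (f : V5 → ℂ) :
    Sof a₁ a₂ a₃ (fun q => conj (f q)) = fun p => conj (Sbof a₁ a₂ a₃ f p) := by
  funext p
  simp only [Sof, Sbof, Tof_conj, Lop_conj, Lbop_conj, map_sub]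

lemma contDiff_uc (k : Fin 3) : ContDiff ℝ (⊤ : ℕ∞) (uc k) := by
  have : ContDiff ℝ (⊤ : ℕ∞) fun q : V5 => ((q (k.addNat 2) : ℝ) : ℂ) :=
    Complex.ofRealCLM.contDiff.comp (contDiff_apply ℝ ℝ (k.addNat 2))
  exact this

lemma uc_conj (k : Fin 3) : (fun q => conj (uc k q)) = uc k := by
  funext q
  simp [uc, Complex.conj_ofReal]

/-- The boxed relations `B B̄ = 1` and `Ā + B̄ A = 0` for General Class III₂: if
`[L̄, T] = A·T + B·S` and at every point the vectors `(T u₁, T u₂, T u₃)` and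
`(S u₁, S u₂, S u₃)` of `ℂ³` are linearly independent, then `B·conj B ≡ 1` and
`conj A + conj B · A ≡ 0`. -/
theorem class_III₂_boxed_relations
    (ha₁ : ContDiff ℝ (⊤ : ℕ∞) a₁) (ha₂ : ContDiff ℝ (⊤ : ℕ∞) a₂)
    (ha₃ : ContDiff ℝ (⊤ : ℕ∞) a₃) (A B : V5 → ℂ)
    (hAB : ∀ f : V5 → ℂ, ContDiff ℝ (⊤ : ℕ∞) f → ∀ p,
        Lbop a₁ a₂ a₃ (Tof a₁ a₂ a₃ f) p - Tof a₁ a₂ a₃ (Lbop a₁ a₂ a₃ f) p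
          = A p * Tof a₁ a₂ a₃ f p + B p * Sof a₁ a₂ a₃ f p)
    (hindep : ∀ p, LinearIndependent ℂ
        ![fun k : Fin 3 => Tof a₁ a₂ a₃ (uc k) p,
          fun k : Fin 3 => Sof a₁ a₂ a₃ (uc k) p]) :
    ∀ p, B p * conj (B p) = 1 ∧ conj (A p) + conj (B p) * A p = 0 := by
  intro p
  -- key pointwise relations for the coordinate functions
  have key : ∀ k : Fin 3,
      (conj (A p) + conj (B p) * A p) * Tof a₁ a₂ a₃ (uc k) p
        + (B p * conj (B p) - 1) * Sof a₁ a₂ a₃ (uc k) p = 0 := by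
    intro k
    have hsm := contDiff_uc k
    -- T u_k is real
    have hT : conj (Tof a₁ a₂ a₃ (uc k) p) = Tof a₁ a₂ a₃ (uc k) p := by
      have := congrFun (Tof_conj a₁ a₂ a₃ (uc k)) p
      rw [uc_conj] at this
      exact this.symm
    -- S u_k = conj (S̄ u_k)
    have hS : Sof a₁ a₂ a₃ (uc k) p = conj (Sbof a₁ a₂ a₃ (uc k) p) := by
      have := congrFun (Sof_conj a₁ a₂ a₃ (uc k)) p
      rw [uc_conj] at this
      exact this
    -- S̄ u_k = A T u_k + B S u_k
    have hE : Sbof a₁ a₂ a₃ (uc k) p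
        = A p * Tof a₁ a₂ a₃ (uc k) p + B p * Sof a₁ a₂ a₃ (uc k) p := by
      have := hAB (uc k) hsm p
      simpa [Sbof] using this
    set Tk := Tof a₁ a₂ a₃ (uc k) p
    set Sk := Sof a₁ a₂ a₃ (uc k) p
    have hcS : conj Sk = A p * Tk + B p * Sk := by
      conv_lhs => rw [hS]
      rw [Complex.conj_conj]
      exact hE
    have h1 : Sk = conj (A p) * Tk + conj (B p) * (A p * Tk + B p * Sk) := by
      calc Sk = conj (Sbof a₁ a₂ a₃ (uc k) p) := hS
        _ = conj (A p * Tk + B p * Sk) := by rw [hE]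
        _ = conj (A p) * conj Tk + conj (B p) * conj Sk := by
            rw [map_add, map_mul, map_mul]
        _ = conj (A p) * Tk + conj (B p) * (A p * Tk + B p * Sk) := by
            rw [hT, hcS]
    linear_combination -h1
  -- use linear independence
  have hli := hindep p
  rw [Fintype.linearIndependent_iff] at hli
  have hz := hli ![conj (A p) + conj (B p) * A p, B p * conj (B p) - 1] ?_
  · constructor
    · have := hz 1
      simp at this
      linear_combination this
    · have := hz 0
      simpa using this
  · funext k
    have hk := key k
    simp only [Fin.sum_univ_two, Pi.add_apply, Pi.smul_apply, Matrix.cons_val_zero,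
      Matrix.cons_val_one, Matrix.head_cons, smul_eq_mul, Pi.zero_apply]
    linear_combination hk


end
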